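/- Theorem 1.A. Let β ∈ [0,1], n ∈ ℕ, and let Δ̲ : {k ∈ ℕ₀^({0,1}²) : k₊₊ = n} → [−1,1] be a function. Then the following three assertions are equivalent: (i) Δ̲ is a lower β-confidence bound for the parameter q ↦ q₀₁ − q₁₀ in the multinomial model M = (M_{n,q} : q ∈ Prob({0,1}²)); (ii) Δ̲ is a lower β-confidence bound for the parameter (π,χ) ↦ π₁·(χ^{(2)}_{1|1} − χ^{(1)}_{1|1}) − (1−π₁)·(χ^{(2)}_{0|0} − χ^{(1)}_{0|0}) in the full latent class model P₂; (iii) Δ̲ is a lower β-confidence bound for the parameter (π,χ) ↦ π₁·(χ^{(2)}_{1|1} − χ^{(1)}_{1|1}) in the restricted latent class model P_{2,≤}. -/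

import Mathlib

open scoped BigOperators

noncomputable section

/-- `p` is a discrete probability density on the finite set `X`,
i.e. a function `X → [0,1]` summing to `1`. -/
def IsProb {X : Type*} [Fintype X] (p : X → ℝ) : Prop :=
  (∀ x, 0 ≤ p x ∧ p x ≤ 1) ∧ ∑ x, p x = 1

/-- `χ` is a Markov transition density: `χ x` is a probability density for each `x`. -/
def IsMarkov {X Y : Type*} [Fintype Y] (χ : X → Y → ℝ) : Prop :=
  ∀ x, IsProb (χ x)

/-- The mixture density `μ₁(π,χ)` on `{0,1}` (indices: `χ i j = χ_{j|i}`). -/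
def mu1 (π : Fin 2 → ℝ) (χ : Fin 2 → Fin 2 → ℝ) : Fin 2 → ℝ :=
  fun j => ∑ i, π i * χ i j

/-- The mixture density `μ₂(π,χ)` on `{0,1}²` (indices: `χ i j = χ_{j|i}`). -/
def mu2 (π : Fin 2 → ℝ) (χ : Fin 2 → Fin 2 × Fin 2 → ℝ) : Fin 2 × Fin 2 → ℝ :=
  fun j => ∑ i, π i * χ i j

/-- First-test characteristic: `chi1 χ i ι = χ^{(1)}_{ι|i} = χ_{ι0|i} + χ_{ι1|i}`. -/
def chi1 (χ : Fin 2 → Fin 2 × Fin 2 → ℝ) : Fin 2 → Fin 2 → ℝ :=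
  fun i ι => χ i (ι, 0) + χ i (ι, 1)

/-- Second-test characteristic: `chi2 χ i ι = χ^{(2)}_{ι|i} = χ_{0ι|i} + χ_{1ι|i}`. -/
def chi2 (χ : Fin 2 → Fin 2 × Fin 2 → ℝ) : Fin 2 → Fin 2 → ℝ :=
  fun i ι => χ i (0, ι) + χ i (1, ι)

/-- The multinomial point mass `M_{n,q}({k}) = n! ∏_x q_x^{k_x}/k_x!`. -/
def mPMF {X : Type*} [Fintype X] (n : ℕ) (q : X → ℝ) (k : X → ℕ) : ℝ :=
  (n.factorial : ℝ) * ∏ x, q x ^ k x / ((k x).factorial : ℝ)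

/-- `mProb n q S` is the probability, under the multinomial distribution `M_{n,q}`
(supported on `{k : Σ_x k_x = n}`), of the event `S`. -/
def mProb {X : Type*} [Fintype X] (n : ℕ) (q : X → ℝ) (S : Set (X → ℕ)) : ℝ :=
  ∑' k : X → ℕ, Set.indicator {k | (∑ x, k x) = n ∧ k ∈ S} (mPMF n q) k


lemma mPMF_nonneg {X : Type*} [Fintype X] (n : ℕ) {q : X → ℝ} (hq : ∀ x, 0 ≤ q x)
    (k : X → ℕ) : 0 ≤ mPMF n q k := by
  unfold mPMF
  refine mul_nonneg (Nat.cast_nonneg _) (Finset.prod_nonneg fun x _ => ?_)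
  exact div_nonneg (pow_nonneg (hq x) _) (Nat.cast_nonneg _)

lemma mProb_summable {X : Type*} [Fintype X] (n : ℕ) (q : X → ℝ) (S : Set (X → ℕ)) :
    Summable (Set.indicator {k | (∑ x, k x) = n ∧ k ∈ S} (mPMF n q)) := by
  apply summable_of_finite_support
  apply Set.Finite.subset (Set.Finite.pi (fun _ : X => Set.finite_Iic n))
  intro k hk
  have hsum : (∑ x, k x) = n := by
    by_contra h
    exact hk (Set.indicator_of_notMem (fun hm => h hm.1) _)
  intro x _
  simp only [Set.mem_Iic]
  calc k x ≤ ∑ y, k y := Finset.single_le_sum (fun _ _ => Nat.zero_le _) (Finset.mem_univ x)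
    _ = n := hsum

lemma mProb_mono {X : Type*} [Fintype X] (n : ℕ) {q : X → ℝ} (hq : ∀ x, 0 ≤ q x)
    {S T : Set (X → ℕ)} (hST : S ⊆ T) : mProb n q S ≤ mProb n q T := by
  refine Summable.tsum_le_tsum ?_ (mProb_summable n q S) (mProb_summable n q T)
  intro k
  apply Set.indicator_le_indicator_of_subset
  · exact fun x hx => ⟨hx.1, hST hx.2⟩
  · exact fun _ => mPMF_nonneg n hq _

lemma mu2_isProb {π : Fin 2 → ℝ} {χ : Fin 2 → Fin 2 × Fin 2 → ℝ}
    (hπ : IsProb π) (hχ : IsMarkov χ) : IsProb (mu2 π χ) := by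
  obtain ⟨hπb, hπs⟩ := hπ
  constructor
  · intro j
    have h0 := (hπb 0); have h1 := (hπb 1)
    have c0 := (hχ 0).1 j; have c1 := (hχ 1).1 j
    have hs : π 0 + π 1 = 1 := by simpa [Fin.sum_univ_two] using hπs
    constructor
    · simp only [mu2, Fin.sum_univ_two]; nlinarith
    · simp only [mu2, Fin.sum_univ_two]; nlinarith
  · have hs : π 0 + π 1 = 1 := by simpa [Fin.sum_univ_two] using hπs
    have c0 : χ 0 (0,0) + χ 0 (0,1) + (χ 0 (1,0) + χ 0 (1,1)) = 1 := by
      simpa [Fintype.sum_prod_type, Fin.sum_univ_two] using (hχ 0).2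
    have c1 : χ 1 (0,0) + χ 1 (0,1) + (χ 1 (1,0) + χ 1 (1,1)) = 1 := by
      simpa [Fintype.sum_prod_type, Fin.sum_univ_two] using (hχ 1).2
    simp only [mu2, Fintype.sum_prod_type, Fin.sum_univ_two]
    linear_combination π 0 * c0 + π 1 * c1 + hs

lemma key_identity {π : Fin 2 → ℝ} {χ : Fin 2 → Fin 2 × Fin 2 → ℝ}
    (hπ : IsProb π) :
    mu2 π χ (0, 1) - mu2 π χ (1, 0)
      = π 1 * (chi2 χ 1 1 - chi1 χ 1 1) - (1 - π 1) * (chi2 χ 0 0 - chi1 χ 0 0) := by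
  have hs : π 0 + π 1 = 1 := by simpa [Fin.sum_univ_two] using hπ.2
  simp only [mu2, chi1, chi2, Fin.sum_univ_two]
  have h0 : π 0 = 1 - π 1 := by linarith
  rw [h0]; ring

/-- Theorem 1.A: for a `[-1,1]`-valued function `Δ` on `{k : k₊₊ = n}`, being a lower
β-confidence bound for `q ↦ q₀₁ - q₁₀` in the multinomial model, for
`(π,χ) ↦ π₁(Se₂ - Se₁) - (1-π₁)(Sp₂ - Sp₁)` in the full latent class model, and for
`(π,χ) ↦ π₁(Se₂ - Se₁)` in the restricted latent class model (`Sp₁ ≤ Sp₂`), are all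
equivalent. -/
theorem stmt_0 (β : ℝ) (hβ : β ∈ Set.Icc (0:ℝ) 1) (n : ℕ) (hn : 0 < n)
    (Δ : ((Fin 2 × Fin 2) → ℕ) → ℝ)
    (hΔ : ∀ k, (∑ x, k x) = n → Δ k ∈ Set.Icc (-1:ℝ) 1) :
    ((∀ q : Fin 2 × Fin 2 → ℝ, IsProb q →
        β ≤ mProb n q {k | Δ k ≤ q (0, 1) - q (1, 0)}) ↔
      (∀ π : Fin 2 → ℝ, ∀ χ : Fin 2 → Fin 2 × Fin 2 → ℝ, IsProb π → IsMarkov χ →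
        β ≤ mProb n (mu2 π χ) {k | Δ k ≤
          π 1 * (chi2 χ 1 1 - chi1 χ 1 1) - (1 - π 1) * (chi2 χ 0 0 - chi1 χ 0 0)})) ∧
    ((∀ q : Fin 2 × Fin 2 → ℝ, IsProb q →
        β ≤ mProb n q {k | Δ k ≤ q (0, 1) - q (1, 0)}) ↔
      (∀ π : Fin 2 → ℝ, ∀ χ : Fin 2 → Fin 2 × Fin 2 → ℝ, IsProb π → IsMarkov χ →
        chi1 χ 0 0 ≤ chi2 χ 0 0 →
        β ≤ mProb n (mu2 π χ) {k | Δ k ≤ π 1 * (chi2 χ 1 1 - chi1 χ 1 1)})) := by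
  have hπ01 : IsProb (![0, 1] : Fin 2 → ℝ) :=
    ⟨by intro x; fin_cases x <;> norm_num, by simp [Fin.sum_univ_two]⟩
  constructor
  · constructor
    · intro h π χ hπ hχ
      have hq := h (mu2 π χ) (mu2_isProb hπ hχ)
      rwa [key_identity hπ] at hq
    · intro h q hq
      have hχ : IsMarkov (![q, q] : Fin 2 → Fin 2 × Fin 2 → ℝ) := by
        intro i; fin_cases i <;> simpa using hq
      have hmu : mu2 (![0, 1] : Fin 2 → ℝ) ![q, q] = q := by
        funext j; simp [mu2, Fin.sum_univ_two]
      have hA : (![0, 1] : Fin 2 → ℝ) 1 * (chi2 ![q, q] 1 1 - chi1 ![q, q] 1 1)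
          - (1 - (![0, 1] : Fin 2 → ℝ) 1) * (chi2 ![q, q] 0 0 - chi1 ![q, q] 0 0)
          = q (0, 1) - q (1, 0) := by
        simp [chi1, chi2]
      have := h (![0, 1] : Fin 2 → ℝ) ![q, q] hπ01 hχ
      rwa [hmu, hA] at this
  · constructor
    · intro h π χ hπ hχ hsp
      have hq := h (mu2 π χ) (mu2_isProb hπ hχ)
      have hle : mu2 π χ (0, 1) - mu2 π χ (1, 0) ≤ π 1 * (chi2 χ 1 1 - chi1 χ 1 1) := by
        rw [key_identity hπ]
        have hπ0 : 0 ≤ π 0 := (hπ.1 0).1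
        have hs : π 0 + π 1 = 1 := by simpa [Fin.sum_univ_two] using hπ.2
        nlinarith [mul_nonneg (show (0:ℝ) ≤ 1 - π 1 by linarith) (sub_nonneg.2 hsp)]
      refine le_trans hq (mProb_mono n (fun x => ((mu2_isProb hπ hχ).1 x).1) ?_)
      exact fun k hk => le_trans hk hle
    · intro h q hq
      set δ : Fin 2 × Fin 2 → ℝ := fun j => if j = ((0 : Fin 2), (0 : Fin 2)) then 1 else 0
        with hδdef
      have hδ : IsProb δ := by
        constructor
        · intro x; simp only [hδdef]; split <;> norm_num
        · simp [hδdef, Fintype.sum_prod_type, Fin.sum_univ_two]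
      have hχ : IsMarkov (![δ, q] : Fin 2 → Fin 2 × Fin 2 → ℝ) := by
        intro i; fin_cases i
        · simpa using hδ
        · simpa using hq
      have hmu : mu2 (![0, 1] : Fin 2 → ℝ) ![δ, q] = q := by
        funext j; simp [mu2, Fin.sum_univ_two]
      have hsp : chi1 (![δ, q] : Fin 2 → Fin 2 × Fin 2 → ℝ) 0 0
          ≤ chi2 (![δ, q] : Fin 2 → Fin 2 × Fin 2 → ℝ) 0 0 := by
        simp [chi1, chi2, hδdef]
      have hA : (![0, 1] : Fin 2 → ℝ) 1 * (chi2 ![δ, q] 1 1 - chi1 ![δ, q] 1 1)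
          = q (0, 1) - q (1, 0) := by
        simp [chi1, chi2]
      have := h (![0, 1] : Fin 2 → ℝ) ![δ, q] hπ01 hχ hsp
      rwa [hmu, hA] at this

end
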